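/- Let the group SU(2)×SU(2) be embedded block-diagonally in GL(4,ℂ) by (A,B) ↦ diag(A,B). Then (i) the subspace of traceless 4×4 complex matrices X with diag(A,B)·X·diag(A,B)⁻¹ = X for all A, B ∈ SU(2) is the one-dimensional span ℂ·diag(1,1,−1,−1); and (ii) for the matrix g′ ∈ U(4) determined by g′e₁ = e₃, g′e₂ = −e₄, g′e₃ = e₁, g′e₄ = e₂, one has g′·diag(1,1,−1,−1)·(g′)⁻¹ = −diag(1,1,−1,−1). -/
import Mathlib


/-!
STATEMENT 11: Traceless 4×4 complex matrices fixed under conjugation by all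
diag(A,B), A,B ∈ SU(2), form the line ℂ·diag(1,1,−1,−1); the ℤ₄-generator g′
conjugates diag(1,1,−1,−1) to its negative.
-/

noncomputable section

abbrev Mat2 : Type := Matrix (Fin 2) (Fin 2) ℂ

/-- The special unitary group SU(2), as a set of matrices. -/
def SU2 : Set Mat2 := {A | A * A.conjTranspose = 1 ∧ A.det = 1}

/-- The block-diagonal matrix diag(A, B) ∈ U(4). -/
def bd4 (A B : Mat2) : Matrix (Fin 4) (Fin 4) ℂ :=
  !![A 0 0, A 0 1, 0, 0;
     A 1 0, A 1 1, 0, 0;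
     0, 0, B 0 0, B 0 1;
     0, 0, B 1 0, B 1 1]

/-- g′ ∈ U(4): g′e₁ = e₃, g′e₂ = −e₄, g′e₃ = e₁, g′e₄ = e₂. -/
def g4 : Matrix (Fin 4) (Fin 4) ℂ :=
  !![0, 0, 1, 0;
     0, 0, 0, 1;
     1, 0, 0, 0;
     0, -1, 0, 0]

lemma bd4_mul (A B C D : Mat2) : bd4 A B * bd4 C D = bd4 (A*C) (B*D) := by
  ext i j
  fin_cases i <;> fin_cases j <;>
    simp [bd4, Matrix.mul_apply, Fin.sum_univ_four, Fin.sum_univ_two,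
      Matrix.vecHead, Matrix.vecTail]

lemma bd4_one : bd4 1 1 = 1 := by
  ext i j
  fin_cases i <;> fin_cases j <;>
    simp [bd4, Matrix.one_apply, Matrix.vecHead, Matrix.vecTail]

def uu : Mat2 := !![Complex.I, 0; 0, -Complex.I]
def jj : Mat2 := !![0, 1; -1, 0]

lemma uu_mem : uu ∈ SU2 := by
  constructor
  · ext i j
    fin_cases i <;> fin_cases j <;>
      simp [uu, Matrix.mul_apply, Fin.sum_univ_two, Matrix.one_apply,
        Matrix.conjTranspose_apply]
  · simp [uu, Matrix.det_fin_two_of]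

lemma jj_mem : jj ∈ SU2 := by
  constructor
  · ext i j
    fin_cases i <;> fin_cases j <;>
      simp [jj, Matrix.mul_apply, Fin.sum_univ_two, Matrix.one_apply,
        Matrix.conjTranspose_apply]
  · simp [jj, Matrix.det_fin_two_of]

lemma one_mem : (1 : Mat2) ∈ SU2 := by
  constructor <;> simp [SU2]

lemma key {A B : Mat2} (hA : A ∈ SU2) (hB : B ∈ SU2) (X : Matrix (Fin 4) (Fin 4) ℂ)
    (h : bd4 A B * X * (bd4 A B)⁻¹ = X) : bd4 A B * X = X * bd4 A B := by
  have hinv : (bd4 A B)⁻¹ = bd4 A.conjTranspose B.conjTranspose := by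
    apply Matrix.inv_eq_right_inv
    rw [bd4_mul, hA.1, hB.1, bd4_one]
  have hleft : bd4 A.conjTranspose B.conjTranspose * bd4 A B = 1 := by
    rw [bd4_mul, mul_eq_one_comm.mp hA.1, mul_eq_one_comm.mp hB.1, bd4_one]
  rw [hinv] at h
  calc bd4 A B * X = bd4 A B * X * (bd4 A.conjTranspose B.conjTranspose * bd4 A B) := by
        rw [hleft, mul_one]
    _ = (bd4 A B * X * bd4 A.conjTranspose B.conjTranspose) * bd4 A B := by
        rw [mul_assoc, mul_assoc, mul_assoc]
    _ = X * bd4 A B := by rw [h]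

lemma cancel {a x : ℂ} (ha : a ≠ 0) (h : a * x = 0) : x = 0 :=
  (mul_eq_zero.mp h).resolve_left ha

lemma Isub : (Complex.I - 1 : ℂ) ≠ 0 := by
  simp [Complex.ext_iff]

lemma Iadd : (Complex.I + 1 : ℂ) ≠ 0 := by
  simp [Complex.ext_iff]

lemma twoI : (2 * Complex.I : ℂ) ≠ 0 := by
  simp

set_option maxHeartbeats 1600000 in
theorem statement11 :
    ({X : Matrix (Fin 4) (Fin 4) ℂ | X.trace = 0 ∧
        ∀ A B : Mat2, A ∈ SU2 → B ∈ SU2 → bd4 A B * X * (bd4 A B)⁻¹ = X}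
      = Set.range (fun c : ℂ => c • Matrix.diagonal ![1, 1, -1, -1])) ∧
    g4 * Matrix.diagonal ![1, 1, -1, -1] * g4⁻¹ = -Matrix.diagonal ![1, 1, -1, -1] := by
  constructor
  · ext X
    simp only [Set.mem_setOf_eq, Set.mem_range]
    constructor
    · rintro ⟨htr, hcom⟩
      have c1 := key uu_mem one_mem X (hcom uu 1 uu_mem one_mem)
      have c2 := key one_mem uu_mem X (hcom 1 uu one_mem uu_mem)
      have c3 := key jj_mem one_mem X (hcom jj 1 jj_mem one_mem)
      have c4 := key one_mem jj_mem X (hcom 1 jj one_mem jj_mem)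
      have E1 : ∀ i j, (bd4 uu 1 * X) i j = (X * bd4 uu 1) i j := fun i j => by rw [c1]
      have E2 : ∀ i j, (bd4 1 uu * X) i j = (X * bd4 1 uu) i j := fun i j => by rw [c2]
      have E3 : ∀ i j, (bd4 jj 1 * X) i j = (X * bd4 jj 1) i j := fun i j => by rw [c3]
      have E4 : ∀ i j, (bd4 1 jj * X) i j = (X * bd4 1 jj) i j := fun i j => by rw [c4]
      have h01 := E1 0 1
      have h02 := E1 0 2
      have h03 := E1 0 3
      have h10 := E1 1 0
      have h12 := E1 1 2
      have h13 := E1 1 3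
      have h20 := E1 2 0
      have h21 := E1 2 1
      have h30 := E1 3 0
      have h31 := E1 3 1
      have h23 := E2 2 3
      have h32 := E2 3 2
      have hd1 := E3 0 1
      have hd2 := E4 2 3
      simp [bd4, uu, jj, Matrix.mul_apply, Fin.sum_univ_four, Matrix.vecHead,
        Matrix.vecTail, Matrix.one_apply]
        at h01 h02 h03 h10 h12 h13 h20 h21 h30 h31 h23 h32 hd1 hd2
      have z01 : X 0 1 = 0 := cancel twoI (by linear_combination h01)
      have z02 : X 0 2 = 0 := cancel Isub (by linear_combination h02)
      have z03 : X 0 3 = 0 := cancel Isub (by linear_combination h03)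
      have z10 : X 1 0 = 0 := cancel twoI (by linear_combination -h10)
      have z12 : X 1 2 = 0 := cancel Iadd (by linear_combination -h12)
      have z13 : X 1 3 = 0 := cancel Iadd (by linear_combination -h13)
      have z20 : X 2 0 = 0 := cancel Isub (by linear_combination -h20)
      have z21 : X 2 1 = 0 := cancel Iadd (by linear_combination h21)
      have z30 : X 3 0 = 0 := cancel Isub (by linear_combination -h30)
      have z31 : X 3 1 = 0 := cancel Iadd (by linear_combination h31)
      have z23 : X 2 3 = 0 := cancel twoI (by linear_combination h23)
      have z32 : X 3 2 = 0 := cancel twoI (by linear_combination -h32)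
      simp only [Matrix.trace, Matrix.diag, Fin.sum_univ_four] at htr
      refine ⟨X 0 0, ?_⟩
      ext i j
      fin_cases i <;> fin_cases j <;>
        simp [Matrix.diagonal, Matrix.vecHead, Matrix.vecTail, z01, z02, z03, z10, z12,
          z13, z20, z21, z30, z31, z23, z32] <;>
        first
          | rfl
          | linear_combination -hd1
          | linear_combination (-1/2 : ℂ) * htr + hd1/2 + hd2/2
          | linear_combination (-1/2 : ℂ) * htr + hd1/2 - hd2/2
    · rintro ⟨c, rfl⟩
      constructor
      · simp [Matrix.trace, Matrix.diag, Fin.sum_univ_four, Matrix.diagonal]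
      · intro A B hA hB
        have hinv : (bd4 A B)⁻¹ = bd4 A.conjTranspose B.conjTranspose := by
          apply Matrix.inv_eq_right_inv
          rw [bd4_mul, hA.1, hB.1, bd4_one]
        have hright : bd4 A B * bd4 A.conjTranspose B.conjTranspose = 1 := by
          rw [bd4_mul, hA.1, hB.1, bd4_one]
        have hcomm : bd4 A B * (c • Matrix.diagonal ![1, 1, -1, -1])
            = (c • Matrix.diagonal ![1, 1, -1, -1]) * bd4 A B := by
          ext i j
          fin_cases i <;> fin_cases j <;>
            simp [bd4, Matrix.mul_apply, Fin.sum_univ_four, Matrix.diagonal,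
              Matrix.vecHead, Matrix.vecTail] <;> ring
        rw [hinv, hcomm, mul_assoc, hright, mul_one]
  · have hinv : g4⁻¹ = !![0, 0, 1, 0; 0, 0, 0, -1; 1, 0, 0, 0; 0, 1, 0, 0] := by
      apply Matrix.inv_eq_right_inv
      ext i j
      fin_cases i <;> fin_cases j <;>
        simp [g4, Matrix.mul_apply, Fin.sum_univ_four, Matrix.one_apply,
          Matrix.vecHead, Matrix.vecTail]
    rw [hinv]
    ext i j
    fin_cases i <;> fin_cases j <;>
      simp [g4, Matrix.mul_apply, Fin.sum_univ_four, Matrix.diagonal,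
        Matrix.vecHead, Matrix.vecTail]

end
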